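/- Every densely homogeneous metrizable space of the first category is a Λ-set; that is, if X is metrizable, X is a countable union of nowhere dense subsets, X has a dense σ-discrete subset, and for any two σ-discrete dense subsets A, B of X there is a homeomorphism h of X onto itself with h(A) = B, then every σ-discrete subset of X is a Gδ-set in X. -/

import Mathlib

open Set Topology

/-- A subset `A` of a topological space `X` is σ-discrete (in `X`) if it is a countable
union of sets `A n` such that every point of `X` has a neighborhood containing at most
one point of `A n`. -/
def SigmaDiscrete {X : Type*} [TopologicalSpace X] (A : Set X) : Prop :=
  ∃ f : ℕ → Set X, A = ⋃ n, f n ∧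
    ∀ n, ∀ x : X, ∃ U ∈ 𝓝 x, (U ∩ f n).Subsingleton

section Aux

variable {X : Type*}

/-- A subset of a σ-discrete set is σ-discrete. -/
lemma SigmaDiscrete.mono [TopologicalSpace X] {A B : Set X} (hA : SigmaDiscrete A)
    (hBA : B ⊆ A) : SigmaDiscrete B := by
  obtain ⟨f, hfU, hf⟩ := hA
  refine ⟨fun n => f n ∩ B, ?_, ?_⟩
  · have : (⋃ n, f n ∩ B) = (⋃ n, f n) ∩ B := by rw [iUnion_inter]
    rw [this, ← hfU, inter_eq_right.mpr hBA]
  · intro n x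
    obtain ⟨U, hU, hs⟩ := hf n x
    exact ⟨U, hU, fun a ha b hb => hs ⟨ha.1, ha.2.1⟩ ⟨hb.1, hb.2.1⟩⟩

/-- A union of two σ-discrete sets is σ-discrete. -/
lemma SigmaDiscrete.union [TopologicalSpace X] {A B : Set X} (hA : SigmaDiscrete A)
    (hB : SigmaDiscrete B) : SigmaDiscrete (A ∪ B) := by
  obtain ⟨f, hfU, hf⟩ := hA
  obtain ⟨g, hgU, hg⟩ := hB
  refine ⟨fun n => if n % 2 = 0 then f (n / 2) else g (n / 2), ?_, ?_⟩
  · ext x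
    simp only [mem_union, hfU, hgU, mem_iUnion]
    constructor
    · rintro (⟨k, hk⟩ | ⟨k, hk⟩)
      · exact ⟨2 * k, by simpa using hk⟩
      · refine ⟨2 * k + 1, ?_⟩
        have h1 : (2 * k + 1) % 2 = 1 := by omega
        have h2 : (2 * k + 1) / 2 = k := by omega
        simp [h1, h2, hk]
    · rintro ⟨n, hn⟩
      by_cases h : n % 2 = 0
      · simp only [h, if_pos] at hn
        exact Or.inl ⟨n / 2, by simpa using hn⟩
      · simp only [h, if_neg] at hn
        exact Or.inr ⟨n / 2, by simpa [h] using hn⟩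
  · intro n x
    by_cases h : n % 2 = 0
    · obtain ⟨U, hU, hs⟩ := hf (n / 2) x
      exact ⟨U, hU, by simpa [h] using hs⟩
    · obtain ⟨U, hU, hs⟩ := hg (n / 2) x
      exact ⟨U, hU, by simpa [h] using hs⟩

/-- Each "discrete piece" of a σ-discrete set is closed (in a T1 space). -/
lemma piece_isClosed [TopologicalSpace X] [T1Space X] {S : Set X}
    (h : ∀ x : X, ∃ U ∈ 𝓝 x, (U ∩ S).Subsingleton) : IsClosed S := by
  rw [← closure_subset_iff_isClosed]
  intro x hx
  obtain ⟨U, hU, hsub⟩ := h x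
  obtain ⟨a, haU, haS⟩ := mem_closure_iff_nhds.mp hx U hU
  by_cases hxa : x = a
  · exact hxa ▸ haS
  · have hU' : U ∩ {a}ᶜ ∈ 𝓝 x :=
      Filter.inter_mem hU (isOpen_compl_singleton.mem_nhds (by simpa using hxa))
    obtain ⟨b, hbU, hbS⟩ := mem_closure_iff_nhds.mp hx _ hU'
    have : b = a := hsub ⟨hbU.1, hbS⟩ ⟨haU, haS⟩
    exact absurd this (by simpa using hbU.2)

/-- The complement of a σ-discrete set is a Gδ set (in a T1 space). -/
lemma SigmaDiscrete.isGδ_compl [TopologicalSpace X] [T1Space X] {A : Set X}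
    (hA : SigmaDiscrete A) : IsGδ Aᶜ := by
  obtain ⟨f, hfU, hf⟩ := hA
  rw [hfU, compl_iUnion]
  exact IsGδ.iInter fun n => ((piece_isClosed (hf n)).isOpen_compl).isGδ

/-- A homeomorphic image of a σ-discrete set is σ-discrete. -/
lemma SigmaDiscrete.image [TopologicalSpace X] {A : Set X} (e : X ≃ₜ X)
    (hA : SigmaDiscrete A) : SigmaDiscrete (e '' A) := by
  obtain ⟨f, hfU, hf⟩ := hA
  refine ⟨fun n => e '' f n, by rw [hfU, image_iUnion], ?_⟩
  intro n x
  obtain ⟨U, hU, hs⟩ := hf n (e.symm x)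
  refine ⟨e.symm ⁻¹' U, e.symm.continuous.continuousAt.preimage_mem_nhds
    (by simpa using hU), ?_⟩
  rintro a ⟨haU, haI⟩ b ⟨hbU, hbI⟩
  obtain ⟨a', ha', rfl⟩ := haI
  obtain ⟨b', hb', rfl⟩ := hbI
  have : a' = b' := by
    have ha'' : a' ∈ U ∩ f n := by
      refine ⟨?_, ha'⟩
      simpa using haU
    have hb'' : b' ∈ U ∩ f n := by
      refine ⟨?_, hb'⟩
      simpa using hbU
    exact hs ha'' hb''
  rw [this]

/-- An `r`-separated set in a metric space is closed. -/
lemma separated_isClosed {X : Type*} [MetricSpace X] {r : ℝ} (hr : 0 < r) {S : Set X}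
    (hS : ∀ a ∈ S, ∀ b ∈ S, a ≠ b → r ≤ dist a b) : IsClosed S := by
  rw [← closure_subset_iff_isClosed]
  intro x hx
  by_contra hxS
  obtain ⟨a, haS, hax⟩ := Metric.mem_closure_iff.mp hx (r / 2) (by linarith)
  have hda : 0 < dist x a := dist_pos.mpr (fun h => hxS (h ▸ haS))
  obtain ⟨b, hbS, hbx⟩ := Metric.mem_closure_iff.mp hx (min (r / 2) (dist x a))
    (lt_min (by linarith) hda)
  have hba : b ≠ a := by
    intro h
    rw [h] at hbx
    exact absurd (lt_min_iff.mp hbx).2 (lt_irrefl _)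
  have : dist a b < r := by
    have h1 : dist x a < r / 2 := hax
    have h2 : dist x b < r / 2 := lt_of_lt_of_le hbx (min_le_left _ _)
    calc dist a b ≤ dist a x + dist x b := dist_triangle _ _ _
      _ < r := by rw [dist_comm a x]; linarith
  exact absurd (hS a haS b hbS (Ne.symm hba)) (not_le.mpr this)

/-- Existence of a maximal `r`-separated subset of `W`: it is `r`-separated and
every point of `W` is within distance `< r` of it. -/
lemma exists_maximal_separated {X : Type*} [MetricSpace X] (W : Set X) {r : ℝ} (hr : 0 < r) :
    ∃ S : Set X, S ⊆ W ∧ (∀ a ∈ S, ∀ b ∈ S, a ≠ b → r ≤ dist a b) ∧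
      ∀ y ∈ W, ∃ s ∈ S, dist y s < r := by
  have hchain : ∀ c ⊆ {S : Set X | S ⊆ W ∧ ∀ a ∈ S, ∀ b ∈ S, a ≠ b → r ≤ dist a b},
      IsChain (· ⊆ ·) c → ∃ ub ∈ {S : Set X | S ⊆ W ∧ ∀ a ∈ S, ∀ b ∈ S, a ≠ b → r ≤ dist a b},
        ∀ s ∈ c, s ⊆ ub := by
    intro c hcS hchain
    refine ⟨⋃₀ c, ⟨?_, ?_⟩, fun s hs => subset_sUnion_of_mem hs⟩
    · exact sUnion_subset fun s hs => (hcS hs).1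
    · rintro a ⟨s, hs, has⟩ b ⟨t, ht, hbt⟩ hab
      rcases hchain.total hs ht with hst | hts
      · exact (hcS ht).2 a (hst has) b hbt hab
      · exact (hcS hs).2 a has b (hts hbt) hab
  obtain ⟨S, hSmax⟩ := zorn_subset
    {S : Set X | S ⊆ W ∧ ∀ a ∈ S, ∀ b ∈ S, a ≠ b → r ≤ dist a b} hchain
  have hSprop : S ⊆ W ∧ ∀ a ∈ S, ∀ b ∈ S, a ≠ b → r ≤ dist a b := hSmax.prop
  obtain ⟨hSW, hSsep⟩ := hSprop
  refine ⟨S, hSW, hSsep, ?_⟩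
  intro y hyW
  by_contra hy
  push_neg at hy
  have hyS : y ∉ S := fun h => absurd (hy y h) (by simpa using hr)
  have hmem : insert y S ∈
      {S : Set X | S ⊆ W ∧ ∀ a ∈ S, ∀ b ∈ S, a ≠ b → r ≤ dist a b} := by
    constructor
    · exact insert_subset hyW hSW
    · rintro a (rfl | haS) b (rfl | hbS) hab
      · exact absurd rfl hab
      · simpa [dist_comm] using hy b hbS
      · simpa [dist_comm] using hy a haS
      · exact hSsep a haS b hbS hab
  have := hSmax.eq_of_subset hmem (subset_insert y S)
  exact hyS (this ▸ mem_insert y S)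

/-- The preimage of a Gδ set under a continuous map is Gδ. -/
lemma isGδ_preimage_of_continuous {X Y : Type*} [TopologicalSpace X] [TopologicalSpace Y]
    {g : X → Y} (hg : Continuous g) {s : Set Y} (hs : IsGδ s) : IsGδ (g ⁻¹' s) := by
  obtain ⟨T, hTo, hTc, rfl⟩ := hs
  rw [Set.preimage_sInter]
  exact IsGδ.biInter hTc fun t ht => ((hTo t ht).preimage hg).isGδ

/-- In a metric space which is an increasing countable union of closed sets with empty
interior, there is a dense σ-discrete Gδ subset. -/
lemma exists_dense_sigmaDiscrete_isGδ {X : Type*} [MetricSpace X]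
    (F : ℕ → Set X) (hFc : ∀ n, IsClosed (F n)) (hFi : ∀ n, interior (F n) = ∅)
    (hFm : ∀ m n, m ≤ n → F m ⊆ F n) (hFu : (⋃ n, F n) = univ) :
    ∃ E : Set X, Dense E ∧ SigmaDiscrete E ∧ IsGδ E := by
  have hr : ∀ j : ℕ, (0 : ℝ) < 1 / (j + 1) := fun j => by positivity
  have key : ∀ j : ℕ, ∃ S : Set X, S ⊆ (F j)ᶜ ∧
      (∀ a ∈ S, ∀ b ∈ S, a ≠ b → 1 / (j + 1 : ℝ) ≤ dist a b) ∧
      ∀ y ∈ (F j)ᶜ, ∃ s ∈ S, dist y s < 1 / (j + 1 : ℝ) :=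
    fun j => exists_maximal_separated _ (hr j)
  choose S hSW hSsep hSnet using key
  refine ⟨⋃ j, S j, ?_, ?_, ?_⟩
  · -- Dense
    rw [Metric.dense_iff]
    intro x ρ hρ
    obtain ⟨j, hj⟩ := exists_nat_one_div_lt (show (0 : ℝ) < ρ / 2 by linarith)
    have hball : ¬ (Metric.ball x (ρ / 2) ⊆ F j) := by
      intro hsub
      have : Metric.ball x (ρ / 2) ⊆ interior (F j) :=
        interior_maximal hsub Metric.isOpen_ball
      rw [hFi j] at this
      exact this (Metric.mem_ball_self (by linarith))
    obtain ⟨y, hyb, hyF⟩ := not_subset.mp hball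
    obtain ⟨s, hsS, hys⟩ := hSnet j y hyF
    refine ⟨s, ?_, mem_iUnion.mpr ⟨j, hsS⟩⟩
    have h1 : dist y x < ρ / 2 := hyb
    have h2 : dist y s < ρ / 2 := lt_trans hys (by exact_mod_cast hj)
    have : dist s x < ρ := by
      calc dist s x ≤ dist s y + dist y x := dist_triangle _ _ _
        _ < ρ := by rw [dist_comm s y]; linarith
    exact this
  · -- SigmaDiscrete
    refine ⟨S, rfl, ?_⟩
    intro j x
    refine ⟨Metric.ball x (1 / (2 * (j + 1))), Metric.ball_mem_nhds x (by positivity), ?_⟩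
    rintro a ⟨ha, haS⟩ b ⟨hb, hbS⟩
    by_contra hab
    have hd : dist a b < 1 / (j + 1 : ℝ) := by
      have h1 : dist a x < 1 / (2 * (j + 1 : ℝ)) := ha
      have h2 : dist b x < 1 / (2 * (j + 1 : ℝ)) := hb
      have hj0 : ((j : ℝ) + 1) ≠ 0 := by positivity
      have he : 1 / (2 * (j + 1 : ℝ)) + 1 / (2 * (j + 1 : ℝ)) = 1 / (j + 1 : ℝ) := by
        rw [← add_div]
        rw [div_eq_div_iff (by positivity) (by positivity)]
        ring
      calc dist a b ≤ dist a x + dist x b := dist_triangle _ _ _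
        _ < 1 / (j + 1 : ℝ) := by rw [dist_comm x b]; linarith
    exact absurd (hSsep j a haS b hbS hab) (not_le.mpr hd)
  · -- IsGδ
    set E : Set X := ⋃ j, S j with hE
    have hclosed : ∀ n, IsClosed (E ∩ F n) := by
      intro n
      have heq : E ∩ F n = ⋃ j ∈ Finset.range n, (S j ∩ F n) := by
        ext x
        simp only [hE, mem_inter_iff, mem_iUnion, Finset.mem_range]
        constructor
        · rintro ⟨⟨j, hj⟩, hxF⟩
          refine ⟨j, ?_, hj, hxF⟩
          by_contra hjn
          push_neg at hjn
          exact (hSW j hj) (hFm n j hjn hxF)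
        · rintro ⟨j, _, hj, hxF⟩
          exact ⟨⟨j, hj⟩, hxF⟩
      rw [heq]
      exact isClosed_biUnion_finset fun j _ =>
        (separated_isClosed (hr j) (hSsep j)).inter (hFc n)
    have heq : E = ⋂ n, ((F n)ᶜ ∪ (E ∩ F n)) := by
      ext x
      simp only [mem_iInter, mem_union, mem_compl_iff, mem_inter_iff]
      constructor
      · intro hx n
        by_cases h : x ∈ F n
        · exact Or.inr ⟨hx, h⟩
        · exact Or.inl h
      · intro hx
        have : x ∈ ⋃ n, F n := hFu ▸ mem_univ x
        obtain ⟨n, hn⟩ := mem_iUnion.mp this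
        rcases hx n with h | h
        · exact absurd hn h
        · exact h.1
    rw [heq]
    exact IsGδ.iInter fun n => ((hFc n).isOpen_compl.isGδ).union ((hclosed n).isGδ)

end Aux

/-- Every densely homogeneous metrizable space of the first category is a `Λ`-set:
every σ-discrete subset is a `Gδ`-set in `X`. -/
theorem stmt_2 {X : Type*} [TopologicalSpace X] [TopologicalSpace.MetrizableSpace X]
    (hmeager : ∃ f : ℕ → Set X, (∀ n, IsNowhereDense (f n)) ∧ (⋃ n, f n) = Set.univ)
    (hdense : ∃ A : Set X, Dense A ∧ SigmaDiscrete A)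
    (hDH : ∀ A B : Set X, Dense A → SigmaDiscrete A → Dense B → SigmaDiscrete B →
      ∃ h : X ≃ₜ X, h '' A = B)
    (A : Set X) (hA : SigmaDiscrete A) : IsGδ A := by
  letI : MetricSpace X := TopologicalSpace.metrizableSpaceMetric X
  obtain ⟨f, hfnd, hfu⟩ := hmeager
  -- Build an increasing sequence of closed nowhere dense sets covering X.
  set F : ℕ → Set X := fun n => ⋃ i ∈ Finset.range (n + 1), closure (f i) with hF
  have hFc : ∀ n, IsClosed (F n) :=
    fun n => isClosed_biUnion_finset fun i _ => isClosed_closure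
  have hFm : ∀ m n, m ≤ n → F m ⊆ F n := by
    intro m n hmn x hx
    simp only [hF, mem_iUnion, Finset.mem_range, exists_prop] at hx ⊢
    obtain ⟨i, hi, hxi⟩ := hx
    exact ⟨i, by omega, hxi⟩
  have hFi : ∀ n, interior (F n) = ∅ := by
    intro n
    induction n with
    | zero =>
      have : F 0 = closure (f 0) := by
        simp only [hF]
        rw [Finset.range_one]
        ext x
        simp
      rw [this]
      exact hfnd 0
    | succ n ih =>
      have hstep : F (n + 1) = F n ∪ closure (f (n + 1)) := by
        simp only [hF]
        rw [Finset.range_add_one, Finset.set_biUnion_insert]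
        exact union_comm _ _
      rw [hstep]
      -- interior of union of two closed sets with empty interior is empty
      have h1 : interior (F n ∪ closure (f (n + 1))) \ F n ⊆
          interior (closure (f (n + 1))) := by
        apply interior_maximal
        · intro x hx
          rcases (interior_subset hx.1 : x ∈ F n ∪ closure (f (n + 1))) with h | h
          · exact absurd h hx.2
          · exact h
        · exact isOpen_interior.sdiff (hFc n)
      have hnd : interior (closure (f (n + 1))) = ∅ := hfnd (n + 1)
      rw [hnd] at h1
      have h2 : interior (F n ∪ closure (f (n + 1))) ⊆ F n := by
        intro x hx
        by_contra hxF
        exact (h1 ⟨hx, hxF⟩).elim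
      have h3 : interior (F n ∪ closure (f (n + 1))) ⊆ interior (F n) :=
        interior_maximal h2 isOpen_interior
      rw [ih] at h3
      exact subset_empty_iff.mp h3
  have hFu : (⋃ n, F n) = univ := by
    apply eq_univ_of_univ_subset
    rw [← hfu]
    apply iUnion_subset
    intro n x hx
    exact mem_iUnion.mpr ⟨n, mem_biUnion (Finset.self_mem_range_succ n) (subset_closure hx)⟩
  obtain ⟨E, hEd, hEsd, hEg⟩ := exists_dense_sigmaDiscrete_isGδ F hFc hFi hFm hFu
  -- By dense homogeneity, E ∪ A is a homeomorphic image of E, hence Gδ.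
  have hBsd : SigmaDiscrete (E ∪ A) := hEsd.union hA
  have hBd : Dense (E ∪ A) := hEd.mono subset_union_left
  obtain ⟨h, hh⟩ := hDH E (E ∪ A) hEd hEsd hBd hBsd
  have hBg : IsGδ (E ∪ A) := by
    rw [← hh, show h '' E = h.symm ⁻¹' E from h.toEquiv.image_eq_preimage_symm E]
    exact isGδ_preimage_of_continuous h.symm.continuous hEg
  have hdiff : IsGδ (E \ A)ᶜ := (hEsd.mono diff_subset).isGδ_compl
  have hAeq : A = (E ∪ A) ∩ (E \ A)ᶜ := by
    ext x
    simp only [mem_inter_iff, mem_union, mem_compl_iff, mem_diff, not_and, not_not]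
    constructor
    · intro hx
      exact ⟨Or.inr hx, fun _ => hx⟩
    · rintro ⟨h1 | h1, h2⟩
      · exact h2 h1
      · exact h1
  rw [hAeq]
  exact hBg.inter hdiff
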